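/- Let k, s, τ⁻, τ⁺, F be real numbers with k > 0, 0 ≤ s ≤ k, τ⁻ ≥ 0, τ⁺ ≥ 0, F ≥ k·τ⁻ + s·τ⁺, and F ≤ exp((k−s)/k)·k·τ⁻ + s·τ⁺. Then for every x with 0 ≤ x < k, g(x) ≥ F − k·τ⁻. -/

import Mathlib

open Real

lemma case2_aux (c : ℝ) : AntitoneOn (fun y : ℝ => Real.exp (c / y) * y - y) (Set.Ioi 0) := by
  apply antitoneOn_of_deriv_nonpos (convex_Ioi 0)
  · apply ContinuousOn.sub _ continuousOn_id
    apply ContinuousOn.mul _ continuousOn_id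
    apply Real.continuousOn_exp.comp
    · exact ContinuousOn.div continuousOn_const continuousOn_id (fun y hy => ne_of_gt hy)
    · exact Set.mapsTo_univ _ _
  · intro y hy
    rw [interior_Ioi] at hy
    have hy0 : y ≠ 0 := ne_of_gt hy
    have h1 : HasDerivAt (fun z : ℝ => c / z) (-(c / y ^ 2)) y := by
      simpa [div_eq_mul_inv, mul_comm] using (hasDerivAt_inv hy0).const_mul c
    have h2 := ((h1.exp.mul (hasDerivAt_id y)).sub (hasDerivAt_id y))
    exact h2.differentiableAt.differentiableWithinAt
  · intro y hy
    rw [interior_Ioi] at hy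
    have hy0 : y ≠ 0 := ne_of_gt hy
    have h1 : HasDerivAt (fun z : ℝ => c / z) (-(c / y ^ 2)) y := by
      simpa [div_eq_mul_inv, mul_comm] using (hasDerivAt_inv hy0).const_mul c
    have h2 := ((h1.exp.mul (hasDerivAt_id y)).sub (hasDerivAt_id y))
    simp only [id_eq] at h2
    rw [show (fun y : ℝ => Real.exp (c / y) * y - y) = ((fun x => Real.exp (c / x)) * id - id) from rfl, h2.deriv]
    have hw : c / y ^ 2 * y = c / y := by field_simp
    have key : (-(c / y) + 1) * Real.exp (c / y) ≤ 1 := by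
      have := mul_le_mul_of_nonneg_right (Real.add_one_le_exp (-(c / y)))
        (le_of_lt (Real.exp_pos (c / y)))
      rwa [← Real.exp_add, neg_add_cancel, Real.exp_zero] at this
    nlinarith [Real.exp_pos (c / y)]

/-- Case 2 of the stream clipper analysis: when
`k τ⁻ + s τ⁺ ≤ F ≤ e^{(k−s)/k} k τ⁻ + s τ⁺`, the bound function `g` satisfies
`g(x) ≥ F − k τ⁻` for every `x ∈ [0, k)`. -/
theorem case2_bound (k s τm τp F : ℝ) (hk : 0 < k)
    (hs0 : 0 ≤ s) (hsk : s ≤ k) (hτm : 0 ≤ τm) (hτp : 0 ≤ τp)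
    (hF1 : k * τm + s * τp ≤ F) (hF2 : F ≤ Real.exp ((k - s) / k) * k * τm + s * τp) :
    ∀ x : ℝ, 0 ≤ x → x < k →
      F - k * τm ≤ (1 - Real.exp (-(k - s) / (k - x))) * (F - x * τm)
        + Real.exp (-(k - s) / (k - x)) * s * τp := by
  intro x hx0 hxk
  set y : ℝ := k - x with hy_def
  have hy : 0 < y := by simp [hy_def]; linarith
  have hyk : y ≤ k := by simp [hy_def]; linarith
  have anti := case2_aux (k - s) (Set.mem_Ioi.mpr hy) (Set.mem_Ioi.mpr hk) hyk
  simp only at anti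
  -- anti : exp ((k-s)/k) * k - k ≤ exp ((k-s)/y) * y - y
  set A : ℝ := Real.exp ((k - s) / y) with hA_def
  have hE : Real.exp (-(k - s) / y) = A⁻¹ := by
    rw [neg_div, Real.exp_neg]
  have hApos : 0 < A := Real.exp_pos _
  rw [show -(k - s) / (k - x) = -(k - s) / y by rw [hy_def], hE]
  clear_value A y
  have hF3 : F - s * τp - x * τm ≤ A * y * τm := by
    have h1 : Real.exp ((k - s) / k) * k ≤ A * y + (k - y) := by linarith
    have h2 : Real.exp ((k - s) / k) * k * τm ≤ (A * y + (k - y)) * τm :=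
      mul_le_mul_of_nonneg_right h1 hτm
    have hx : k - y = x := by simp [hy_def]
    rw [hx] at h2
    have h3 : (A * y + x) * τm = A * y * τm + x * τm := by ring
    rw [h3] at h2
    linarith
  have hprod : A⁻¹ * (F - s * τp - x * τm) ≤ y * τm := by
    have := mul_le_mul_of_nonneg_left hF3 (le_of_lt (inv_pos.mpr hApos))
    have hAA : A⁻¹ * (A * y * τm) = y * τm := by
      field_simp
    linarith [hAA ▸ this]
  nlinarith [hprod]
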